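/- Every kneading automata group is a self-replicating bounded automata group. Precisely: if G = ⟨Y⟩ ≤ Aut(X*) is a kneading automata group with distinguished generating set Y, then G is a bounded automata group and G is self-replicating. -/

import Mathlib

universe u v

/-- The automorphism group of the rooted tree `X*`: permutations of the free monoid
`List X` that preserve the prefix relation. -/
def treeAut (X : Type u) : Subgroup (Equiv.Perm (List X)) where
  carrier := {g | ∀ a b : List X, a <+: b ↔ g a <+: g b}
  one_mem' := by intro a b; simp
  mul_mem' := by
    intro g h hg hh a b
    simpa [Equiv.Perm.mul_apply] using (hh a b).trans (hg (h a) (h b))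
  inv_mem' := by
    intro g hg a b
    simpa using (hg (g⁻¹ a) (g⁻¹ b)).symm

/-- The section of `g` at the word `w`: the unique automorphism `s` satisfying
`g (w ++ v) = g w ++ s v` for all `v` (with junk value `1` if no such permutation exists). -/
noncomputable def secAt {X : Type u} (g : Equiv.Perm (List X)) (w : List X) :
    Equiv.Perm (List X) :=
  haveI := Classical.propDecidable
  if h : ∃ s : Equiv.Perm (List X), ∀ v : List X, g (w ++ v) = g w ++ s v then h.choose
  else 1

/-- The permutation of `X` induced by `g` on the first level of the tree. -/
noncomputable def perm1 {X : Type u} (g : Equiv.Perm (List X)) : Equiv.Perm X :=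
  haveI := Classical.propDecidable
  if h : ∃ σ : Equiv.Perm X, ∀ x : X, g [x] = [σ x] then h.choose else 1

/-- A permutation of `X`, viewed as a finitary automorphism of `X*` of depth (at most) one. -/
def embed1 {X : Type u} (σ : Equiv.Perm X) : Equiv.Perm (List X) where
  toFun w := match w with
    | [] => []
    | x :: vtl => σ x :: vtl
  invFun w := match w with
    | [] => []
    | x :: vtl => σ⁻¹ x :: vtl
  left_inv := by rintro (_ | ⟨x, vtl⟩) <;> simp
  right_inv := by rintro (_ | ⟨x, vtl⟩) <;> simp

/-- `G` is self-similar: all sections of elements of `G` belong to `G`. -/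
def SelfSimilarSub {X : Type u} (G : Subgroup (Equiv.Perm (List X))) : Prop :=
  ∀ g ∈ G, ∀ w : List X, secAt g w ∈ G

/-- `sec_G(v)`: the image of the pointwise stabilizer of `v` in `G` under the
section homomorphism at `v`. -/
def secImage {X : Type u} (G : Subgroup (Equiv.Perm (List X))) (v : List X) :
    Set (Equiv.Perm (List X)) :=
  {h | ∃ g ∈ G, g v = v ∧ secAt g v = h}

/-- `G` is self-replicating: self-similar, transitive on `X`, and `sec_G(x) = G`
for every `x ∈ X`. -/
def SelfReplicating {X : Type u} (G : Subgroup (Equiv.Perm (List X))) : Prop :=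
  SelfSimilarSub G ∧ (∀ x y : X, ∃ g ∈ G, g [x] = [y]) ∧
    ∀ x : X, secImage G [x] = (G : Set (Equiv.Perm (List X)))

/-- `G` is weakly self-replicating: `sec_G(v) = G` for every word `v`. -/
def WeaklySelfReplicating {X : Type u} (G : Subgroup (Equiv.Perm (List X))) : Prop :=
  ∀ v : List X, secImage G v = (G : Set (Equiv.Perm (List X)))

/-- `g` is finitary: all sections at some level are trivial. -/
def IsFinitary {X : Type u} (g : Equiv.Perm (List X)) : Prop :=
  ∃ k : ℕ, ∀ v : List X, v.length = k → secAt g v = 1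

/-- `g` is directed. -/
def IsDirectedAut {X : Type u} (g : Equiv.Perm (List X)) : Prop :=
  ∃ k : ℕ, 1 ≤ k ∧ ∃ w : List X, w.length = k ∧ secAt g w = g ∧
    ∀ v : List X, v.length = k → v ≠ w → IsFinitary (secAt g v)

/-- `g` has bounded activity. -/
def IsBoundedAut {X : Type u} (g : Equiv.Perm (List X)) : Prop :=
  ∃ N : ℕ, ∀ n : ℕ, 1 ≤ n →
    Set.ncard {v : List X | v.length = n ∧ secAt g v ≠ 1} ≤ N

/-- `g` is finite state. -/
def IsFiniteState {X : Type u} (g : Equiv.Perm (List X)) : Prop :=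
  (Set.range fun v : List X => secAt g v).Finite

/-- A bounded automata group: a finitely generated self-similar group of tree
automorphisms, all of whose elements are bounded and finite state. -/
def BoundedAutomataGroup {X : Type u} (G : Subgroup (Equiv.Perm (List X))) : Prop :=
  G ≤ treeAut X ∧ G.FG ∧ SelfSimilarSub G ∧
    ∀ g ∈ G, IsBoundedAut g ∧ IsFiniteState g

/-- An odometer: `⟨d⟩` is transitive on `X` and `d` has exactly one nontrivial
first-level section, which equals `d`. -/
def IsOdometer {X : Type u} (d : Equiv.Perm (List X)) : Prop :=
  (∀ x y : X, ∃ n : ℤ, (d ^ n) [x] = [y]) ∧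
  (∀ x : X, secAt d [x] = 1 ∨ secAt d [x] = d) ∧
  ∃! x : X, secAt d [x] = d

/-- A generalized basilica group, with distinguished generating set `Y`. -/
def GenBasilica {X : Type u} (G : Subgroup (Equiv.Perm (List X)))
    (Y : Set (Equiv.Perm (List X))) : Prop :=
  G ≤ treeAut X ∧ Y.Finite ∧ Subgroup.closure Y = G ∧
    ∀ g ∈ Y, (∀ x : X, secAt g [x] = 1) ∨
      ((∀ x : X, secAt g [x] = 1 ∨ secAt g [x] = g) ∧ ∃! x : X, secAt g [x] = g)

/-- The generating set `Y` is balanced: for each directed `g ∈ Y` with active vertex `x`,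
the least `n ≥ 1` such that `g ^ n` fixes `x` also satisfies that `g ^ n` fixes `X`
pointwise. -/
def BalancedSet {X : Type u} (Y : Set (Equiv.Perm (List X))) : Prop :=
  ∀ g ∈ Y, IsDirectedAut g → ∀ x : X, secAt g [x] = g →
    ∀ n : ℕ, 1 ≤ n → (g ^ n) [x] = [x] →
      (∀ m : ℕ, 1 ≤ m → m < n → (g ^ m) [x] ≠ [x]) →
      ∀ y : X, (g ^ n) [y] = [y]

/-- A bounded automata group in reduced form, with distinguished generating set `Y`. -/
def ReducedForm {X : Type u} (G : Subgroup (Equiv.Perm (List X)))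
    (Y : Set (Equiv.Perm (List X))) : Prop :=
  Y.Finite ∧ Subgroup.closure Y = G ∧
    ∀ g ∈ Y, (∀ x : X, secAt g [x] = 1) ∨
      ((∀ x : X, secAt g [x] = g ∨ ∃ h ∈ G, secAt g [x] = embed1 (perm1 h)) ∧
        ∃! x : X, secAt g [x] = g)

/-- A group of abelian wreath type, with distinguished (self-similar) generating set `Y`. -/
def AbelianWreathType {X : Type u} (G : Subgroup (Equiv.Perm (List X)))
    (Y : Set (Equiv.Perm (List X))) : Prop :=
  G ≤ treeAut X ∧
  (∀ g ∈ G, ∀ h ∈ G, perm1 g * perm1 h = perm1 h * perm1 g) ∧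
  Y.Finite ∧ Subgroup.closure Y = G ∧
  (∀ g ∈ Y, ∀ x : X, secAt g [x] ∈ Y) ∧
  ∀ g ∈ Y, (∀ x : X, secAt g [x] = 1) ∨
    ((∀ x : X, secAt g [x] = g ∨ ∃ h ∈ G, secAt g [x] = embed1 (perm1 h)) ∧
      ∃! x : X, secAt g [x] = g)

/-- The setoid on `X` whose classes are the orbits of `⟨σ⟩`, i.e. the cycles (including
length-one cycles) in the complete cycle decomposition of `σ`. -/
def cycleSetoid {X : Type u} (σ : Equiv.Perm X) : Setoid X where
  r x y := ∃ n : ℤ, (σ ^ n) x = y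
  iseqv := by
    constructor
    · exact fun x => ⟨0, by simp⟩
    · rintro x y ⟨n, rfl⟩
      exact ⟨-n, by rw [← Equiv.Perm.mul_apply, ← zpow_add, neg_add_cancel, zpow_zero,
        Equiv.Perm.one_apply]⟩
    · rintro x y z ⟨n, rfl⟩ ⟨m, rfl⟩
      exact ⟨m + n, by rw [← Equiv.Perm.mul_apply, ← zpow_add]⟩

/-- The vertex set of the cycle graph of a sequence of permutations: elements of `X`
together with the cycles of the permutations. -/
def CycleVertex {X : Type u} {ι : Type v} (σ : ι → Equiv.Perm X) : Type (max u v) :=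
  X ⊕ Σ i : ι, Quotient (cycleSetoid (σ i))

/-- The cycle graph of a sequence of permutations of `X`: a bipartite graph on
`X ⊔ {cycles}`, with an edge between `x ∈ X` and a cycle whenever `x` appears in it. -/
def cycleGraph {X : Type u} {ι : Type v} (σ : ι → Equiv.Perm X) :
    SimpleGraph (CycleVertex σ) where
  Adj a b := ∃ (x : X) (p : Σ i : ι, Quotient (cycleSetoid (σ i))),
      Quotient.mk (cycleSetoid (σ p.1)) x = p.2 ∧
      ((a = Sum.inl x ∧ b = Sum.inr p) ∨ (a = Sum.inr p ∧ b = Sum.inl x))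
  symm := by
    exact ⟨by rintro a b ⟨x, p, hx, h | h⟩ <;> exact ⟨x, p, hx, by tauto⟩⟩
  loopless := by
    exact ⟨by rintro a ⟨x, p, hx, ⟨h1, h2⟩ | ⟨h1, h2⟩⟩ <;> simp_all⟩

/-- A sequence of permutations of `X` is tree-like if its cycle graph is a tree. -/
def TreeLike {X : Type u} {ι : Type v} (σ : ι → Equiv.Perm X) : Prop :=
  (cycleGraph σ).IsTree

/-- A kneading automata group, with distinguished generating set `Y`. -/
def Kneading {X : Type u} (G : Subgroup (Equiv.Perm (List X)))
    (Y : Set (Equiv.Perm (List X))) : Prop :=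
  G ≤ treeAut X ∧ Y.Finite ∧ Subgroup.closure Y = G ∧
  (∀ g ∈ Y, ∀ x : X, secAt g [x] ∈ Y) ∧
  (∀ h ∈ Y, h ≠ 1 → ∃! p : Equiv.Perm (List X) × X, p.1 ∈ Y ∧ secAt p.1 [p.2] = h) ∧
  (∀ h ∈ Y, ∀ x y : X, (∃ n : ℤ, ((perm1 h) ^ n) x = y) →
      secAt h [x] ≠ 1 → secAt h [y] ≠ 1 → x = y) ∧
  TreeLike (fun h : {h : Equiv.Perm (List X) // h ∈ Y ∧ h ≠ 1} => perm1 h.1)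

/-- A group is virtually abelian if it has an abelian subgroup of finite index. -/
def VirtuallyAbelian (G : Type u) [Group G] : Prop :=
  ∃ H : Subgroup G, H.FiniteIndex ∧ ∀ a b : ↥H, a * b = b * a

/-- A group is locally finite if all of its finitely generated subgroups are finite. -/
def LocallyFiniteGroup (G : Type u) [Group G] : Prop :=
  ∀ H : Subgroup G, H.FG → Finite ↥H

/-- The class of elementary amenable groups: the smallest class of groups containing all
finite groups and all abelian groups and closed under subgroups (equivalently, injective
homomorphisms), quotients (equivalently, surjective homomorphisms), group extensions and
directed unions. -/
inductive ElementaryAmenable : ∀ (G : Type u) [inst : Group G], Prop where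
  | of_finite (G : Type u) [Group G] (h : Finite G) : ElementaryAmenable G
  | of_comm (G : Type u) [Group G] (h : ∀ a b : G, a * b = b * a) : ElementaryAmenable G
  | of_injective (G H : Type u) [Group G] [Group H] (f : G →* H)
      (hf : Function.Injective f) (hH : ElementaryAmenable H) : ElementaryAmenable G
  | of_surjective (G H : Type u) [Group G] [Group H] (f : G →* H)
      (hf : Function.Surjective f) (hG : ElementaryAmenable G) : ElementaryAmenable H
  | of_extension (G : Type u) [Group G] (N : Subgroup G) [N.Normal]
      (hN : ElementaryAmenable ↥N) (hQ : ElementaryAmenable (G ⧸ N)) :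
      ElementaryAmenable G
  | of_directedUnion (G : Type u) [Group G] (ι : Type u) (H : ι → Subgroup G)
      (hdir : Directed (· ≤ ·) H) (hsup : (⨆ i, H i) = ⊤)
      (h : ∀ i, ElementaryAmenable ↥(H i)) : ElementaryAmenable G

/-- The ordinal-indexed hierarchy of elementary amenable groups: `EG₀` consists of the
groups that are finite or abelian (closed under isomorphism); `EG_{α+1}` consists of the
`EG_α`-by-`EG₀` groups together with the directed unions of `EG_α` groups; and
`EG_λ = ⋃_{β<λ} EG_β` for `λ` a limit. -/
inductive InEG : Ordinal.{u} → ∀ (G : Type u) [inst : Group G], Prop where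
  | base (G : Type u) [Group G] (h : Finite G ∨ ∀ a b : G, a * b = b * a) : InEG 0 G
  | iso (α : Ordinal.{u}) (G H : Type u) [Group G] [Group H] (e : G ≃* H)
      (h : InEG α G) : InEG α H
  | succ_ext (α : Ordinal.{u}) (G : Type u) [Group G] (N : Subgroup G) [N.Normal]
      (hN : InEG α ↥N)
      (hQ : Finite (G ⧸ N) ∨ ∀ a b : G ⧸ N, a * b = b * a) : InEG (α + 1) G
  | succ_lim (α : Ordinal.{u}) (G : Type u) [Group G] (ι : Type u) (H : ι → Subgroup G)
      (hdir : Directed (· ≤ ·) H) (hsup : (⨆ i, H i) = ⊤)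
      (h : ∀ i, InEG α ↥(H i)) : InEG (α + 1) G
  | limit (α β : Ordinal.{u}) (G : Type u) [Group G] (hα : Order.IsSuccLimit α) (hβ : β < α)
      (h : InEG β G) : InEG α G

/-- The construction rank of an elementary amenable group: the least ordinal `α` with
`G ∈ EG_α`. -/
noncomputable def egRank (G : Type u) [Group G] : Ordinal.{u} :=
  sInf {α : Ordinal.{u} | InEG α G}

/-- `M` is a normal subgroup of `H` (both viewed inside a common ambient group). -/
def NormalIn {G : Type u} [Group G] (M H : Subgroup G) : Prop :=
  M ≤ H ∧ ∀ h ∈ H, ∀ m ∈ M, h * m * h⁻¹ ∈ M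

/-- The verbal subgroup of the subgroup `H` given by the word `γ`, viewed inside the
ambient group. -/
def verbalIn {G : Type u} [Group G] {n : ℕ} (γ : FreeGroup (Fin n)) (H : Subgroup G) :
    Subgroup G :=
  Subgroup.closure {g | ∃ f : Fin n → G, (∀ i, f i ∈ H) ∧ FreeGroup.lift f γ = g}
section API

open List

variable {X : Type u}

theorem treeAut_nil {g : Equiv.Perm (List X)} (hg : g ∈ treeAut X) : g [] = [] := by
  have h1 : g⁻¹ [] <+: [] := (hg (g⁻¹ []) []).mpr (by simp)
  have h2 : g⁻¹ [] = [] := List.eq_nil_of_prefix_nil h1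
  calc g [] = g (g⁻¹ []) := by rw [h2]
    _ = [] := by simp

/-- prefixes of w are equinumerous with Fin (w.length+1) -/
def prefixEquiv (w : List X) : {a : List X // a <+: w} ≃ Fin (w.length + 1) where
  toFun a := ⟨a.1.length, by have := a.2.length_le; omega⟩
  invFun i := ⟨w.take i, List.take_prefix _ _⟩
  left_inv a := by
    ext1
    exact (List.prefix_iff_eq_take.mp a.2).symm
  right_inv i := by
    ext
    simp only [List.length_take]
    omega

theorem treeAut_length {g : Equiv.Perm (List X)} (hg : g ∈ treeAut X) (w : List X) :
    (g w).length = w.length := by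
  have e2 : {a : List X // a <+: w} ≃ {b : List X // b <+: g w} :=
    { toFun := fun a => ⟨g a.1, (hg a.1 w).mp a.2⟩
      invFun := fun b => ⟨g⁻¹ b.1, (hg (g⁻¹ b.1) w).mpr (by simpa using b.2)⟩
      left_inv := fun a => by ext1; simp
      right_inv := fun b => by ext1; simp }
  have E : Fin (w.length + 1) ≃ Fin ((g w).length + 1) :=
    ((prefixEquiv w).symm.trans e2).trans (prefixEquiv (g w))
  have := Fin.equiv_iff_eq.mp ⟨E⟩
  omega

theorem exists_sec {g : Equiv.Perm (List X)} (hg : g ∈ treeAut X) (w : List X) :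
    ∃ s : Equiv.Perm (List X), ∀ v : List X, g (w ++ v) = g w ++ s v := by
  have hginv : g⁻¹ ∈ treeAut X := (treeAut X).inv_mem hg
  have key : ∀ (h : Equiv.Perm (List X)), h ∈ treeAut X → ∀ w v : List X,
      h (w ++ v) = h w ++ (h (w ++ v)).drop w.length := by
    intro h hh w v
    obtain ⟨t, ht⟩ := (hh w (w ++ v)).mp (List.prefix_append w v)
    rw [← ht]
    have : (h w).length = w.length := treeAut_length hh w
    simp [this]
  refine ⟨⟨fun v => (g (w ++ v)).drop w.length,
           fun v => (g⁻¹ (g w ++ v)).drop w.length, ?_, ?_⟩, fun v => key g hg w v⟩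
  · intro v
    show (g⁻¹ (g w ++ (g (w ++ v)).drop w.length)).drop w.length = v
    rw [← key g hg w v]
    simp [List.drop_left']
  · intro v
    have h2 := key g⁻¹ hginv (g w) v
    have h3 : g⁻¹ (g w) = w := by simp
    have hlen : (g w).length = w.length := treeAut_length hg w
    rw [h3, hlen] at h2
    show (g (w ++ (g⁻¹ (g w ++ v)).drop w.length)).drop w.length = v
    rw [← h2]
    simp only [Equiv.Perm.inv_def, Equiv.apply_symm_apply]
    rw [← hlen, List.drop_left]

theorem secAt_spec {g : Equiv.Perm (List X)} (hg : g ∈ treeAut X) (w v : List X) :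
    g (w ++ v) = g w ++ secAt g w v := by
  have hex := exists_sec hg w
  simp only [secAt, dif_pos hex]
  exact hex.choose_spec v

theorem secAt_unique {g s : Equiv.Perm (List X)} (hg : g ∈ treeAut X) {w : List X}
    (hs : ∀ v, g (w ++ v) = g w ++ s v) : secAt g w = s :=
  Equiv.ext fun v => List.append_cancel_left ((secAt_spec hg w v).symm.trans (hs v))

theorem secAt_mem {g : Equiv.Perm (List X)} (hg : g ∈ treeAut X) (w : List X) :
    secAt g w ∈ treeAut X := by
  intro a b
  constructor
  · intro hab
    have : g (w ++ a) <+: g (w ++ b) := (hg _ _).mp (by simpa using hab)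
    rw [secAt_spec hg w a, secAt_spec hg w b] at this
    exact (List.prefix_append_right_inj _).mp this
  · intro hab
    have : g (w ++ a) <+: g (w ++ b) := by
      rw [secAt_spec hg w a, secAt_spec hg w b]
      exact (List.prefix_append_right_inj _).mpr hab
    have := (hg _ _).mpr this
    exact (List.prefix_append_right_inj _).mp this

theorem secAt_one (w : List X) : secAt (1 : Equiv.Perm (List X)) w = 1 :=
  secAt_unique (treeAut X).one_mem (fun v => by simp)

theorem secAt_nil {g : Equiv.Perm (List X)} (hg : g ∈ treeAut X) : secAt g [] = g :=
  secAt_unique hg (fun v => by simp [treeAut_nil hg])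

theorem secAt_mul {g h : Equiv.Perm (List X)} (hg : g ∈ treeAut X) (hh : h ∈ treeAut X)
    (w : List X) : secAt (g * h) w = secAt g (h w) * secAt h w := by
  refine secAt_unique ((treeAut X).mul_mem hg hh) (fun v => ?_)
  simp only [Equiv.Perm.mul_apply]
  rw [secAt_spec hh w v, secAt_spec hg (h w) (secAt h w v)]

theorem secAt_inv {g : Equiv.Perm (List X)} (hg : g ∈ treeAut X) (w : List X) :
    secAt g⁻¹ w = (secAt g (g⁻¹ w))⁻¹ := by
  have h1 := secAt_mul ((treeAut X).inv_mem hg) hg (g⁻¹ w)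
  rw [inv_mul_cancel, secAt_one] at h1
  have h2 : g (g⁻¹ w) = w := by simp
  rw [h2] at h1
  exact eq_inv_of_mul_eq_one_left h1.symm

theorem secAt_append {g : Equiv.Perm (List X)} (hg : g ∈ treeAut X) (w u : List X) :
    secAt g (w ++ u) = secAt (secAt g w) u := by
  refine secAt_unique hg (fun v => ?_)
  rw [List.append_assoc, secAt_spec hg w (u ++ v), secAt_spec (secAt_mem hg w) u v,
    secAt_spec hg w u, List.append_assoc]

theorem secAt_cons {g : Equiv.Perm (List X)} (hg : g ∈ treeAut X) (x : X) (w : List X) :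
    secAt g (x :: w) = secAt (secAt g [x]) w := by
  have : x :: w = [x] ++ w := rfl
  rw [this, secAt_append hg]

end API
section API2

variable {X : Type u}

theorem exists_perm1 {g : Equiv.Perm (List X)} (hg : g ∈ treeAut X) :
    ∃ σ : Equiv.Perm X, ∀ x : X, g [x] = [σ x] := by
  have len1 : ∀ (h : Equiv.Perm (List X)), h ∈ treeAut X → ∀ x : X, ∃ y, h [x] = [y] := by
    intro h hh x
    exact List.length_eq_one_iff.mp (treeAut_length hh [x])
  have hginv := (treeAut X).inv_mem hg
  choose f hf using len1 g hg
  choose f' hf' using len1 g⁻¹ hginv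
  refine ⟨⟨f, f', fun x => ?_, fun x => ?_⟩, hf⟩
  · show f' (f x) = x
    have : g⁻¹ [f x] = [f' (f x)] := hf' (f x)
    rw [← hf x] at this
    simp only [Equiv.Perm.inv_def, Equiv.symm_apply_apply] at this
    exact (List.cons.injEq _ _ _ _ ▸ this).1.symm
  · show f (f' x) = x
    have : g [f' x] = [f (f' x)] := hf (f' x)
    rw [← hf' x] at this
    simp only [Equiv.Perm.inv_def, Equiv.apply_symm_apply] at this
    exact (List.cons.injEq _ _ _ _ ▸ this).1.symm

theorem perm1_spec {g : Equiv.Perm (List X)} (hg : g ∈ treeAut X) (x : X) :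
    g [x] = [perm1 g x] := by
  have hex := exists_perm1 hg
  simp only [perm1, dif_pos hex]
  exact hex.choose_spec x

theorem pow_treeAut {g : Equiv.Perm (List X)} (hg : g ∈ treeAut X) (m : ℕ) :
    g ^ m ∈ treeAut X := (treeAut X).pow_mem hg m

theorem pow_apply_single {g : Equiv.Perm (List X)} (hg : g ∈ treeAut X) (m : ℕ) (x : X) :
    (g ^ m) [x] = [((perm1 g) ^ m) x] := by
  induction m generalizing x with
  | zero => simp
  | succ n ih =>
    rw [pow_succ', pow_succ']
    simp only [Equiv.Perm.mul_apply]
    rw [ih x, perm1_spec hg ((perm1 g ^ n) x)]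

theorem secAt_pow_succ {g : Equiv.Perm (List X)} (hg : g ∈ treeAut X) (m : ℕ) (x : X) :
    secAt (g ^ (m + 1)) [x] = secAt g [((perm1 g) ^ m) x] * secAt (g ^ m) [x] := by
  rw [pow_succ']
  rw [secAt_mul hg (pow_treeAut hg m) [x], pow_apply_single hg m x]

/-- L1 : if all sections along the partial orbit are trivial, the section of the power
is trivial. -/
theorem secAt_pow_trivial {g : Equiv.Perm (List X)} (hg : g ∈ treeAut X) (m : ℕ) (x : X)
    (h : ∀ i < m, secAt g [((perm1 g) ^ i) x] = 1) : secAt (g ^ m) [x] = 1 := by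
  induction m with
  | zero => simpa using secAt_one [x]
  | succ n ih =>
    rw [secAt_pow_succ hg n x, h n (by omega), ih (fun i hi => h i (by omega)), one_mul]

/-- L2 : if all sections along the partial orbit are trivial except possibly index `i₀`,
the section of the power equals the section at index `i₀`. -/
theorem secAt_pow_single {g : Equiv.Perm (List X)} (hg : g ∈ treeAut X) {m i₀ : ℕ} (x : X) :
    i₀ < m → (∀ i < m, i ≠ i₀ → secAt g [((perm1 g) ^ i) x] = 1) →
    secAt (g ^ m) [x] = secAt g [((perm1 g) ^ i₀) x] := by
  induction m with
  | zero => omega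
  | succ n ih =>
    intro hi₀ h
    rw [secAt_pow_succ hg n x]
    rcases Nat.lt_or_ge i₀ n with hlt | hge
    · rw [h n (by omega) (by omega), one_mul]
      exact ih hlt (fun i h1 h2 => h i (by omega) h2)
    · have hEq : i₀ = n := by omega
      rw [hEq, secAt_pow_trivial hg n x (fun i hi => h i (by omega) (by omega)), mul_one]

theorem zpow_to_natpow [Finite X] (σ : Equiv.Perm X) (n : ℤ) (x : X) :
    ∃ m : ℕ, (σ ^ m) x = (σ ^ n) x := by
  haveI : Fintype X := Fintype.ofFinite X
  have ho : 0 < orderOf σ := orderOf_pos σ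
  refine ⟨(n % (orderOf σ : ℤ)).toNat, ?_⟩
  have h1 : ((n % (orderOf σ : ℤ)).toNat : ℤ) = n % (orderOf σ : ℤ) :=
    Int.toNat_of_nonneg (Int.emod_nonneg n (by exact_mod_cast ho.ne'))
  have : σ ^ ((n % (orderOf σ : ℤ)).toNat : ℤ) = σ ^ n := by
    rw [h1]
    exact zpow_mod_orderOf σ n ▸ rfl
  rw [← zpow_natCast, this]

end API2
section API3

variable {X : Type u}

theorem secImage_one (G : Subgroup (Equiv.Perm (List X))) (v : List X) :
    (1 : Equiv.Perm (List X)) ∈ secImage G v :=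
  ⟨1, G.one_mem, by simp, secAt_one v⟩

theorem secImage_mul {G : Subgroup (Equiv.Perm (List X))} (hG : G ≤ treeAut X)
    {v : List X} {a b : Equiv.Perm (List X)}
    (ha : a ∈ secImage G v) (hb : b ∈ secImage G v) : a * b ∈ secImage G v := by
  obtain ⟨g₁, hg₁, hfix₁, hsec₁⟩ := ha
  obtain ⟨g₂, hg₂, hfix₂, hsec₂⟩ := hb
  refine ⟨g₁ * g₂, G.mul_mem hg₁ hg₂, ?_, ?_⟩
  · simp [Equiv.Perm.mul_apply, hfix₂, hfix₁]
  · rw [secAt_mul (hG hg₁) (hG hg₂) v, hfix₂, hsec₁, hsec₂]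

theorem secImage_inv {G : Subgroup (Equiv.Perm (List X))} (hG : G ≤ treeAut X)
    {v : List X} {a : Equiv.Perm (List X)}
    (ha : a ∈ secImage G v) : a⁻¹ ∈ secImage G v := by
  obtain ⟨g, hg, hfix, hsec⟩ := ha
  have hfix' : g⁻¹ v = v := by rw [Equiv.Perm.inv_def, Equiv.symm_apply_eq, hfix]
  refine ⟨g⁻¹, G.inv_mem hg, hfix', ?_⟩
  rw [secAt_inv (hG hg) v, hfix', hsec]

theorem secImage_transport {G : Subgroup (Equiv.Perm (List X))} (hG : G ≤ treeAut X)
    {t : Equiv.Perm (List X)} {x y : X} (ht : t ∈ G) (hxy : t [x] = [y])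
    (hs : secAt t [x] ∈ secImage G [x]) {h : Equiv.Perm (List X)}
    (hh : h ∈ secImage G [y]) : h ∈ secImage G [x] := by
  obtain ⟨g, hg, hfix, hsec⟩ := hh
  set s := secAt t [x] with hsdef
  have htA : t ∈ treeAut X := hG ht
  have hgA : g ∈ treeAut X := hG hg
  have hinv : t⁻¹ [y] = [x] := by rw [← hxy]; simp
  have hgt : (g * t) [x] = [y] := by simp [Equiv.Perm.mul_apply, hxy, hfix]
  have hA : secAt (g * t) [x] = h * s := by
    rw [secAt_mul hgA htA [x], hxy, hsec]
  have hmem : s⁻¹ * (h * s) ∈ secImage G [x] := by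
    refine ⟨t⁻¹ * (g * t), G.mul_mem (G.inv_mem ht) (G.mul_mem hg ht), ?_, ?_⟩
    · simp only [Equiv.Perm.mul_apply, hxy, hfix]
      simpa using hinv
    · rw [secAt_mul ((treeAut X).inv_mem htA) ((treeAut X).mul_mem hgA htA) [x],
        hgt, hA, secAt_inv htA [y], hinv]
  have : h = s * (s⁻¹ * (h * s)) * s⁻¹ := by group
  rw [this]
  exact secImage_mul hG (secImage_mul hG hs hmem) (secImage_inv hG hs)

variable {G : Subgroup (Equiv.Perm (List X))} {Y : Set (Equiv.Perm (List X))}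

theorem Y_sub_G (hK : Kneading G Y) : Y ⊆ (G : Set (Equiv.Perm (List X))) := by
  intro g hg
  exact hK.2.2.1 ▸ Subgroup.subset_closure hg

theorem Y_treeAut (hK : Kneading G Y) {g : Equiv.Perm (List X)} (hg : g ∈ Y) :
    g ∈ treeAut X := hK.1 (Y_sub_G hK hg)

theorem sec_word_mem (hK : Kneading G Y) :
    ∀ (w : List X) {g : Equiv.Perm (List X)}, g ∈ Y → secAt g w ∈ insert g Y := by
  intro w
  induction w with
  | nil => intro g hg; rw [secAt_nil (Y_treeAut hK hg)]; exact Set.mem_insert g Y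
  | cons x w ih =>
    intro g hg
    rw [secAt_cons (Y_treeAut hK hg) x w]
    have h1 : secAt g [x] ∈ Y := hK.2.2.2.1 g hg x
    have h2 := ih h1
    rw [Set.insert_eq_self.mpr h1] at h2
    exact Set.mem_insert_iff.mpr (Or.inr h2)

theorem sec_word_mem_Y (hK : Kneading G Y) {g : Equiv.Perm (List X)} (hg : g ∈ Y)
    (w : List X) : secAt g w ∈ Y := by
  have := sec_word_mem hK w hg
  rcases Set.mem_insert_iff.mp this with h | h
  · rw [h]; exact hg
  · exact h

theorem activePoint [Finite X] (hK : Kneading G Y) {g : Equiv.Perm (List X)} {z : X}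
    (hgY : g ∈ Y) (hne : secAt g [z] ≠ 1) : secAt g [z] ∈ secImage G [z] := by
  classical
  have hgt : g ∈ treeAut X := Y_treeAut hK hgY
  set σ := perm1 g with hσ
  have hex : ∃ m : ℕ, 0 < m ∧ (σ ^ m) z = z := by
    refine ⟨orderOf σ, ?_, by rw [pow_orderOf_eq_one]; simp⟩
    exact orderOf_pos σ
  set o := Nat.find hex with ho
  obtain ⟨hopos, hofix⟩ := Nat.find_spec hex
  have claim : ∀ i < o, i ≠ 0 → secAt g [(σ ^ i) z] = 1 := by
    intro i hio hi0
    by_contra hne2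
    have horb : ∃ n : ℤ, ((perm1 g) ^ n) z = (σ ^ i) z :=
      ⟨(i : ℤ), by rw [zpow_natCast]⟩
    have := hK.2.2.2.2.2.1 g hgY z ((σ ^ i) z) horb hne hne2
    exact Nat.find_min hex hio ⟨Nat.pos_of_ne_zero hi0, this.symm⟩
  have hsec : secAt (g ^ o) [z] = secAt g [z] := by
    have := secAt_pow_single hgt (m := o) (i₀ := 0) z hopos
      (fun i hi hne0 => claim i hi hne0)
    rw [pow_zero] at this
    simpa using this
  refine ⟨g ^ o, G.pow_mem (Y_sub_G hK hgY) o, ?_, hsec⟩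
  rw [pow_apply_single hgt o z, ← hσ, hofix]

theorem pow_add_apply {σ : Equiv.Perm X} (a b : ℕ) (x : X) :
    (σ ^ (a + b)) x = (σ ^ a) ((σ ^ b) x) := by
  rw [pow_add, Equiv.Perm.mul_apply]

theorem inCycle [Finite X] (hK : Kneading G Y) {g : Equiv.Perm (List X)} {x y : X}
    (hgY : g ∈ Y) (horb : ∃ n : ℤ, ((perm1 g) ^ n) x = y) :
    ∃ t ∈ G, t [x] = [y] ∧ secAt t [x] ∈ secImage G [x] := by
  classical
  have hgt : g ∈ treeAut X := Y_treeAut hK hgY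
  set σ := perm1 g with hσ
  have hexm : ∃ m : ℕ, (σ ^ m) x = y := by
    obtain ⟨n, hn⟩ := horb
    obtain ⟨m, hm⟩ := zpow_to_natpow σ n x
    exact ⟨m, by rw [hm, hn]⟩
  set m := Nat.find hexm with hmdef
  have hm : (σ ^ m) x = y := Nat.find_spec hexm
  by_cases hall : ∀ i < m, secAt g [(σ ^ i) x] = 1
  · refine ⟨g ^ m, G.pow_mem (Y_sub_G hK hgY) m, ?_, ?_⟩
    · rw [pow_apply_single hgt m x, ← hσ, hm]
    · rw [secAt_pow_trivial hgt m x hall]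
      exact secImage_one G [x]
  · push_neg at hall
    obtain ⟨i₀, hi₀m, hi₀ne⟩ := hall
    set z := (σ ^ i₀) x with hzdef
    have swap : ∀ a b : ℕ, a < b → b < m → (σ ^ a) x = (σ ^ b) x → False := by
      intro a b hab hbm heq
      refine Nat.find_min hexm (show m - b + a < m by omega) ?_
      rw [pow_add_apply (m - b) a x, heq, ← pow_add_apply (m - b) b x]
      rw [show m - b + b = m by omega, hm]
    have uniq : ∀ i < m, i ≠ i₀ → secAt g [(σ ^ i) x] = 1 := by
      intro i him hii₀
      by_contra hne2
      have horb2 : ∃ n : ℤ, ((perm1 g) ^ n) ((σ ^ i) x) = z := by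
        refine ⟨(i₀ : ℤ) - (i : ℤ), ?_⟩
        rw [hzdef, ← hσ]
        have : ((perm1 g) ^ ((i₀ : ℤ) - (i : ℤ))) ((σ ^ i) x)
            = ((perm1 g) ^ ((i₀ : ℤ) - (i : ℤ) + (i : ℤ))) x := by
          rw [zpow_add, Equiv.Perm.mul_apply, zpow_natCast, ← hσ]
        rw [this]
        simp [← hσ]
      have heq := hK.2.2.2.2.2.1 g hgY ((σ ^ i) x) z horb2 hne2 hi₀ne
      rcases Nat.lt_or_ge i i₀ with h1 | h1
      · exact swap i i₀ h1 hi₀m heq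
      · have : i₀ < i := by omega
        exact swap i₀ i this him heq.symm
    -- transport to the active point z with trivial defect
    have hexm₀ : ∃ m' : ℕ, (σ ^ m') x = z := ⟨i₀, rfl⟩
    set m₀ := Nat.find hexm₀ with hm₀def
    have hm₀ : (σ ^ m₀) x = z := Nat.find_spec hexm₀
    have htriv : ∀ i < m₀, secAt g [(σ ^ i) x] = 1 := by
      intro i him₀
      by_contra hne2
      have horb2 : ∃ n : ℤ, ((perm1 g) ^ n) ((σ ^ i) x) = z := by
        refine ⟨(i₀ : ℤ) - (i : ℤ), ?_⟩
        rw [hzdef, ← hσ]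
        have : ((perm1 g) ^ ((i₀ : ℤ) - (i : ℤ))) ((σ ^ i) x)
            = ((perm1 g) ^ ((i₀ : ℤ) - (i : ℤ) + (i : ℤ))) x := by
          rw [zpow_add, Equiv.Perm.mul_apply, zpow_natCast, ← hσ]
        rw [this]
        simp [← hσ]
      have heq := hK.2.2.2.2.2.1 g hgY ((σ ^ i) x) z horb2 hne2 hi₀ne
      exact Nat.find_min hexm₀ him₀ heq
    have ht₀sec : secAt (g ^ m₀) [x] = 1 := secAt_pow_trivial hgt m₀ x htriv
    have ht₀map : (g ^ m₀) [x] = [z] := by rw [pow_apply_single hgt m₀ x, ← hσ, hm₀]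
    have hδz : secAt g [z] ∈ secImage G [z] := activePoint hK hgY hi₀ne
    have hδx : secAt g [z] ∈ secImage G [x] :=
      secImage_transport hK.1 (G.pow_mem (Y_sub_G hK hgY) m₀) ht₀map
        (by rw [ht₀sec]; exact secImage_one G [x]) hδz
    refine ⟨g ^ m, G.pow_mem (Y_sub_G hK hgY) m, ?_, ?_⟩
    · rw [pow_apply_single hgt m x, ← hσ, hm]
    · rw [secAt_pow_single hgt (m := m) (i₀ := i₀) x hi₀m uniq]
      exact hδx

end API3
section API4

variable {X : Type u} {G : Subgroup (Equiv.Perm (List X))} {Y : Set (Equiv.Perm (List X))}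

theorem walk_transport [Finite X] (hK : Kneading G Y) (n : ℕ) :
    ∀ (x y : X)
      (w : (cycleGraph (fun h : {h : Equiv.Perm (List X) // h ∈ Y ∧ h ≠ 1} =>
        perm1 h.1)).Walk (Sum.inl x) (Sum.inl y)), w.length = n →
      ∃ t ∈ G, t [x] = [y] ∧ secAt t [x] ∈ secImage G [x] := by
  induction n using Nat.strong_induction_on with
  | _ n IH =>
    intro x y w hw
    cases w with
    | nil =>
      exact ⟨1, G.one_mem, by simp, by rw [secAt_one]; exact secImage_one G [x]⟩
    | cons h w' =>
      obtain ⟨x₀, p, hxp, hcase⟩ := h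
      rcases hcase with ⟨h1, h2⟩ | ⟨h1, h2⟩
      · have hx₀ : x₀ = x := (Sum.inl.injEq _ _ ▸ h1).symm
        subst hx₀
        subst h2
        cases w' with
        | cons h' w'' =>
          obtain ⟨x₁, p', hx₁p', hcase₂⟩ := h'
          rcases hcase₂ with ⟨h1', h2'⟩ | ⟨h1', h2'⟩
          · exact absurd h1' (by simp)
          · have hp : p = p' := Sum.inr.injEq _ _ ▸ h1'
            subst hp
            subst h2'
            -- x and x₁ lie in the same cycle of perm1 p.1.1
            have horb : ∃ k : ℤ, ((perm1 (p.1 : Equiv.Perm (List X))) ^ k) x₀ = x₁ := by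
              have := Quotient.exact (hxp.trans hx₁p'.symm)
              exact this
            obtain ⟨t₀, ht₀G, ht₀map, ht₀sec⟩ := inCycle hK p.1.2.1 horb
            simp only [SimpleGraph.Walk.length_cons] at hw
            obtain ⟨t₁, ht₁G, ht₁map, ht₁sec⟩ :=
              IH w''.length (lt_of_lt_of_eq (show w''.length < w''.length + 1 + 1 by omega) hw) x₁ y w'' rfl
            refine ⟨t₁ * t₀, G.mul_mem ht₁G ht₀G, ?_, ?_⟩
            · simp [Equiv.Perm.mul_apply, ht₀map, ht₁map]
            · rw [secAt_mul (hK.1 ht₁G) (hK.1 ht₀G) [x₀], ht₀map]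
              have htrans : secAt t₁ [x₁] ∈ secImage G [x₀] :=
                secImage_transport hK.1 ht₀G ht₀map ht₀sec ht₁sec
              exact secImage_mul hK.1 htrans ht₀sec
      · exact absurd h1 (by simp)

theorem transport_final [Finite X] (hK : Kneading G Y) (x y : X) :
    ∃ t ∈ G, t [x] = [y] ∧ secAt t [x] ∈ secImage G [x] := by
  have htree := hK.2.2.2.2.2.2
  have hreach := htree.isConnected.preconnected (Sum.inl x) (Sum.inl y)
  obtain ⟨w⟩ := hreach
  exact walk_transport hK w.length x y w rfl

end API4
section API5

variable {X : Type u} {G : Subgroup (Equiv.Perm (List X))} {Y : Set (Equiv.Perm (List X))}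

theorem selfSimilar_of_kneading (hK : Kneading G Y) : SelfSimilarSub G := by
  intro g hgG
  have hg' : g ∈ Subgroup.closure Y := hK.2.2.1 ▸ hgG
  refine Subgroup.closure_induction (k := Y)
    (p := fun g _ => ∀ w : List X, secAt g w ∈ G) ?_ ?_ ?_ ?_ hg'
  · exact fun h hh w => Y_sub_G hK (sec_word_mem_Y hK hh w)
  · intro w; rw [secAt_one]; exact G.one_mem
  · intro a b ha hb pa pb w
    have haT : a ∈ treeAut X := hK.1 (hK.2.2.1 ▸ ha)
    have hbT : b ∈ treeAut X := hK.1 (hK.2.2.1 ▸ hb)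
    rw [secAt_mul haT hbT w]
    exact G.mul_mem (pa _) (pb _)
  · intro a ha pa w
    have haT : a ∈ treeAut X := hK.1 (hK.2.2.1 ▸ ha)
    rw [secAt_inv haT w]
    exact G.inv_mem (pa _)

theorem secImage_eq_of_kneading [Finite X] (hK : Kneading G Y) (x : X) :
    secImage G [x] = (G : Set (Equiv.Perm (List X))) := by
  apply Set.Subset.antisymm
  · rintro h ⟨g, hg, _, rfl⟩
    exact selfSimilar_of_kneading hK g hg [x]
  · intro g hgG
    have hg' : g ∈ Subgroup.closure Y := hK.2.2.1 ▸ hgG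
    refine Subgroup.closure_induction (k := Y)
      (p := fun g _ => g ∈ secImage G [x]) ?_ ?_ ?_ ?_ hg'
    · intro h hh
      by_cases h1 : h = 1
      · rw [h1]; exact secImage_one G [x]
      · obtain ⟨pz, ⟨hpzY, hpzsec⟩, _⟩ := hK.2.2.2.2.1 h hh h1
        have hzmem : h ∈ secImage G [pz.2] := by
          rw [← hpzsec]
          exact activePoint hK hpzY (by rw [hpzsec]; exact h1)
        obtain ⟨t, htG, htmap, htsec⟩ := transport_final hK x pz.2
        exact secImage_transport hK.1 htG htmap htsec hzmem
    · exact secImage_one G [x]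
    · exact fun a b _ _ pa pb => secImage_mul hK.1 pa pb
    · exact fun a _ pa => secImage_inv hK.1 pa

theorem transitive_of_kneading [Finite X] (hK : Kneading G Y) (x y : X) :
    ∃ g ∈ G, g [x] = [y] := by
  obtain ⟨t, htG, htmap, _⟩ := transport_final hK x y
  exact ⟨t, htG, htmap⟩

theorem fg_of_kneading (hK : Kneading G Y) : G.FG :=
  (Subgroup.fg_iff G).mpr ⟨Y, hK.2.2.1, hK.2.1⟩

end API5
section API6

variable {X : Type u} {G : Subgroup (Equiv.Perm (List X))} {Y : Set (Equiv.Perm (List X))}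

theorem finite_length [Finite X] (n : ℕ) : {l : List X | l.length = n}.Finite := by
  induction n with
  | zero =>
    refine Set.Finite.subset (Set.finite_singleton ([] : List X)) ?_
    intro l hl
    simp only [Set.mem_setOf_eq, List.length_eq_zero_iff] at hl
    simp [hl]
  | succ n ih =>
    refine Set.Finite.subset (Set.Finite.image2 (fun (a : X) (l : List X) => a :: l)
      Set.finite_univ ih) ?_
    intro l hl
    cases l with
    | nil => simp at hl
    | cons a l' =>
      simp only [Set.mem_setOf_eq, List.length_cons, Nat.succ.injEq] at hl
      exact Set.mem_image2.mpr ⟨a, Set.mem_univ a, l', by simpa using hl, rfl⟩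

theorem sec_inj_of_kneading (hK : Kneading G Y) :
    ∀ n : ℕ, ∀ {h : Equiv.Perm (List X)}, h ∈ Y → ∀ {u v : List X},
      u.length = n → v.length = n → secAt h u ≠ 1 → secAt h u = secAt h v → u = v := by
  intro n
  induction n with
  | zero =>
    intro h _ u v hu hv _ _
    rw [List.length_eq_zero_iff] at hu hv
    rw [hu, hv]
  | succ n ih =>
    intro h hh u v hu hv hne heq
    have hT := Y_treeAut hK hh
    have hune : u ≠ [] := by intro h0; rw [h0] at hu; simp at hu
    have hvne : v ≠ [] := by intro h0; rw [h0] at hv; simp at hv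
    set a := u.getLast hune with ha
    set b := v.getLast hvne with hb
    have hu' : u.dropLast ++ [a] = u := List.dropLast_append_getLast hune
    have hv' : v.dropLast ++ [b] = v := List.dropLast_append_getLast hvne
    have hus : secAt h u = secAt (secAt h u.dropLast) [a] := by
      conv_lhs => rw [← hu']
      rw [secAt_append hT]
    have hvs : secAt h v = secAt (secAt h v.dropLast) [b] := by
      conv_lhs => rw [← hv']
      rw [secAt_append hT]
    have hqY : secAt h u.dropLast ∈ Y := sec_word_mem_Y hK hh _
    have hq'Y : secAt h v.dropLast ∈ Y := sec_word_mem_Y hK hh _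
    have hvalY : secAt h u ∈ Y := sec_word_mem_Y hK hh _
    obtain ⟨w, _, huniq⟩ := hK.2.2.2.2.1 (secAt h u) hvalY hne
    have e1 : ((secAt h u.dropLast, a) : Equiv.Perm (List X) × X) = w :=
      huniq _ ⟨hqY, hus.symm⟩
    have e2 : ((secAt h v.dropLast, b) : Equiv.Perm (List X) × X) = w :=
      huniq _ ⟨hq'Y, by rw [← hvs, ← heq]⟩
    have e3 := e1.trans e2.symm
    have eq1 : secAt h u.dropLast = secAt h v.dropLast := congrArg Prod.fst e3
    have eq2 : a = b := congrArg Prod.snd e3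
    have hqne : secAt h u.dropLast ≠ 1 := by
      intro h0
      rw [hus, h0, secAt_one] at hne
      exact hne rfl
    have hlen1 : u.dropLast.length = n := by
      rw [List.length_dropLast, hu]; omega
    have hlen2 : v.dropLast.length = n := by
      rw [List.length_dropLast, hv]; omega
    have := ih hh hlen1 hlen2 hqne eq1
    rw [← hu', ← hv', this, eq2]

theorem gen_bounded [Finite X] (hK : Kneading G Y) {h : Equiv.Perm (List X)}
    (hh : h ∈ Y) : IsBoundedAut h := by
  refine ⟨Y.ncard, fun n _ => ?_⟩
  set S := {v : List X | v.length = n ∧ secAt h v ≠ 1} with hS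
  have hSfin : S.Finite := (finite_length n).subset (fun v hv => hv.1)
  have hinj : Set.InjOn (fun v => secAt h v) S := by
    intro u hu v hv heq
    exact sec_inj_of_kneading hK n hh hu.1 hv.1 hu.2 heq
  have himg : (fun v => secAt h v) '' S ⊆ Y := by
    rintro _ ⟨v, _, rfl⟩
    exact sec_word_mem_Y hK hh v
  calc S.ncard = ((fun v => secAt h v) '' S).ncard := (Set.ncard_image_of_injOn hinj).symm
    _ ≤ Y.ncard := Set.ncard_le_ncard himg hK.2.1

theorem gen_finiteState (hK : Kneading G Y) {h : Equiv.Perm (List X)}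
    (hh : h ∈ Y) : IsFiniteState h := by
  refine Set.Finite.subset (hK.2.1.insert h) ?_
  rintro _ ⟨v, rfl⟩
  exact sec_word_mem hK v hh

theorem bounded_one : IsBoundedAut (1 : Equiv.Perm (List X)) := by
  refine ⟨0, fun n _ => ?_⟩
  have : {v : List X | v.length = n ∧ secAt (1 : Equiv.Perm (List X)) v ≠ 1} = ∅ := by
    ext v; simp [secAt_one]
  rw [this]
  simp

theorem finiteState_one : IsFiniteState (1 : Equiv.Perm (List X)) := by
  refine Set.Finite.subset (Set.finite_singleton 1) ?_
  rintro _ ⟨v, rfl⟩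
  simp [secAt_one]

theorem bounded_mul [Finite X] {a b : Equiv.Perm (List X)} (haT : a ∈ treeAut X)
    (hbT : b ∈ treeAut X) (ha : IsBoundedAut a) (hb : IsBoundedAut b) :
    IsBoundedAut (a * b) := by
  obtain ⟨Na, hNa⟩ := ha
  obtain ⟨Nb, hNb⟩ := hb
  refine ⟨Na + Nb, fun n hn => ?_⟩
  set Sa := {v : List X | v.length = n ∧ secAt a v ≠ 1} with hSa
  set Sb := {v : List X | v.length = n ∧ secAt b v ≠ 1} with hSb
  set T := {v : List X | v.length = n ∧ secAt a (b v) ≠ 1} with hT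
  have hfinSa : Sa.Finite := (finite_length n).subset (fun v hv => hv.1)
  have hfinSb : Sb.Finite := (finite_length n).subset (fun v hv => hv.1)
  have hfinT : T.Finite := (finite_length n).subset (fun v hv => hv.1)
  have hsub : {v : List X | v.length = n ∧ secAt (a * b) v ≠ 1} ⊆ T ∪ Sb := by
    intro v ⟨hlen, hne⟩
    rw [secAt_mul haT hbT v] at hne
    by_cases h1 : secAt b v = 1
    · left
      refine ⟨hlen, ?_⟩
      intro h2
      rw [h1, h2, one_mul] at hne
      exact hne rfl
    · right; exact ⟨hlen, h1⟩
  have hTcard : T.ncard ≤ Na := by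
    have himg : (fun v => b v) '' T ⊆ Sa := by
      rintro _ ⟨v, ⟨hlen, hne⟩, rfl⟩
      exact ⟨by rw [treeAut_length hbT v]; exact hlen, hne⟩
    calc T.ncard = ((fun v => b v) '' T).ncard :=
          (Set.ncard_image_of_injective T b.injective).symm
      _ ≤ Sa.ncard := Set.ncard_le_ncard himg hfinSa
      _ ≤ Na := hNa n hn
  calc {v : List X | v.length = n ∧ secAt (a * b) v ≠ 1}.ncard
      ≤ (T ∪ Sb).ncard := Set.ncard_le_ncard hsub (hfinT.union hfinSb)
    _ ≤ T.ncard + Sb.ncard := Set.ncard_union_le T Sb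
    _ ≤ Na + Nb := add_le_add hTcard (hNb n hn)

theorem bounded_inv [Finite X] {a : Equiv.Perm (List X)} (haT : a ∈ treeAut X)
    (ha : IsBoundedAut a) : IsBoundedAut a⁻¹ := by
  obtain ⟨Na, hNa⟩ := ha
  refine ⟨Na, fun n hn => ?_⟩
  set Sa := {v : List X | v.length = n ∧ secAt a v ≠ 1} with hSa
  have hfinSa : Sa.Finite := (finite_length n).subset (fun v hv => hv.1)
  have heq : {v : List X | v.length = n ∧ secAt a⁻¹ v ≠ 1} ⊆ (fun v => a v) '' Sa := by
    intro v ⟨hlen, hne⟩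
    rw [secAt_inv haT v] at hne
    refine ⟨a⁻¹ v, ⟨?_, fun h0 => hne (by rw [h0]; simp)⟩, by simp⟩
    rw [treeAut_length ((treeAut X).inv_mem haT) v]
    exact hlen
  calc {v : List X | v.length = n ∧ secAt a⁻¹ v ≠ 1}.ncard
      ≤ ((fun v => a v) '' Sa).ncard :=
        Set.ncard_le_ncard heq (hfinSa.image _)
    _ = Sa.ncard := Set.ncard_image_of_injective Sa a.injective
    _ ≤ Na := hNa n hn

theorem finiteState_mul {a b : Equiv.Perm (List X)} (haT : a ∈ treeAut X)
    (hbT : b ∈ treeAut X) (ha : IsFiniteState a) (hb : IsFiniteState b) :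
    IsFiniteState (a * b) := by
  refine Set.Finite.subset (Set.Finite.image2 (fun s t => s * t) ha hb) ?_
  rintro _ ⟨w, rfl⟩
  show secAt (a * b) w ∈ _
  rw [secAt_mul haT hbT w]
  exact Set.mem_image2.mpr ⟨secAt a (b w), ⟨b w, rfl⟩, secAt b w, ⟨w, rfl⟩, rfl⟩

theorem finiteState_inv {a : Equiv.Perm (List X)} (haT : a ∈ treeAut X)
    (ha : IsFiniteState a) : IsFiniteState a⁻¹ := by
  refine Set.Finite.subset (ha.image (fun s => s⁻¹)) ?_
  rintro _ ⟨w, rfl⟩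
  show secAt a⁻¹ w ∈ _
  rw [secAt_inv haT w]
  exact ⟨secAt a (a⁻¹ w), ⟨a⁻¹ w, rfl⟩, rfl⟩

theorem bfs_of_kneading [Finite X] (hK : Kneading G Y) :
    ∀ g ∈ G, IsBoundedAut g ∧ IsFiniteState g := by
  intro g hgG
  have hg' : g ∈ Subgroup.closure Y := hK.2.2.1 ▸ hgG
  refine Subgroup.closure_induction (k := Y)
    (p := fun g _ => IsBoundedAut g ∧ IsFiniteState g) ?_ ?_ ?_ ?_ hg'
  · exact fun h hh => ⟨gen_bounded hK hh, gen_finiteState hK hh⟩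
  · exact ⟨bounded_one, finiteState_one⟩
  · intro x y hx hy px py
    have hxT : x ∈ treeAut X := hK.1 (hK.2.2.1 ▸ hx)
    have hyT : y ∈ treeAut X := hK.1 (hK.2.2.1 ▸ hy)
    exact ⟨bounded_mul hxT hyT px.1 py.1, finiteState_mul hxT hyT px.2 py.2⟩
  · intro x hx px
    have hxT : x ∈ treeAut X := hK.1 (hK.2.2.1 ▸ hx)
    exact ⟨bounded_inv hxT px.1, finiteState_inv hxT px.2⟩

end API6
/-- **Every kneading automata group is a self-replicating bounded automata group.** -/
theorem kneading_selfReplicating_boundedAutomataGroup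
    {X : Type u} [Finite X] [Nontrivial X]
    (G : Subgroup (Equiv.Perm (List X))) (Y : Set (Equiv.Perm (List X)))
    (hK : Kneading G Y) :
    BoundedAutomataGroup G ∧ SelfReplicating G := by
  exact ⟨⟨hK.1, fg_of_kneading hK, selfSimilar_of_kneading hK, bfs_of_kneading hK⟩,
    selfSimilar_of_kneading hK, transitive_of_kneading hK, secImage_eq_of_kneading hK⟩
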